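/- A Killing tensor K_{A,B,C} is invariant under the translations generated by X₃ = ∂/∂z, i.e. ∂K_{A,B,C}/∂z ≡ 0 on ℝ³, if and only if there exist real numbers a₁, a₂, a₃, α₁, α₂, α₃, b₁₃, b₂₃, β₁, c₃ such that its components at (x,y,z) are K¹¹ = a₁ + 2b₁₃y + c₃y², K¹² = α₃ − b₁₃x + b₂₃y − c₃xy, K¹³ = α₂ − β₁y, K²² = a₂ − 2b₂₃x + c₃x², K²³ = α₁ + β₁x, K³³ = a₃. -/

import Mathlib

open Matrix

/-- 3×3 real matrices. -/
abbrev M3 := Matrix (Fin 3) (Fin 3) ℝ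

/-- The cross-product matrix `Sₓ`, satisfying `Sₓ v = x × v`. -/
def Smat (x : Fin 3 → ℝ) : M3 :=
  !![0, -x 2, x 1; x 2, 0, -x 0; -x 1, x 0, 0]

/-- The Killing tensor field `K_{A,B,C}(x) = A + Sₓ Bᵀ + B Sₓᵀ + Sₓ C Sₓᵀ`. -/
def KABC (A B C : M3) (x : Fin 3 → ℝ) : M3 :=
  A + Smat x * Bᵀ + B * (Smat x)ᵀ + Smat x * C * (Smat x)ᵀ

/-- Partial derivative `∂_k f` at `x`. -/
noncomputable def pder (k : Fin 3) (f : (Fin 3 → ℝ) → ℝ) (x : Fin 3 → ℝ) : ℝ :=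
  fderiv ℝ f x (Pi.single k 1)

lemma pder2_poly (c0 c1 c2 c3 c11 c12 c13 c22 c23 c33 : ℝ) (x : Fin 3 → ℝ) :
    pder 2 (fun y => c0 + c1 * y 0 + c2 * y 1 + c3 * y 2 + c11 * (y 0 * y 0)
      + c12 * (y 0 * y 1) + c13 * (y 0 * y 2) + c22 * (y 1 * y 1) + c23 * (y 1 * y 2)
      + c33 * (y 2 * y 2)) x
    = c3 + c13 * x 0 + c23 * x 1 + 2 * c33 * x 2 := by
  have h0 := hasFDerivAt_apply (𝕜 := ℝ) (0 : Fin 3) x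
  have h1 := hasFDerivAt_apply (𝕜 := ℝ) (1 : Fin 3) x
  have h2 := hasFDerivAt_apply (𝕜 := ℝ) (2 : Fin 3) x
  have H := (((((((((hasFDerivAt_const c0 x).add (h0.const_mul c1)).add
    (h1.const_mul c2)).add (h2.const_mul c3)).add
    ((h0.mul h0).const_mul c11)).add ((h0.mul h1).const_mul c12)).add
    ((h0.mul h2).const_mul c13)).add ((h1.mul h1).const_mul c22)).add
    ((h1.mul h2).const_mul c23)).add ((h2.mul h2).const_mul c33)
  erw [pder, H.fderiv]
  simp [Pi.single_apply]
  ring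

lemma KABC_symm (A B C : M3) (hA : A.IsSymm) (hC : C.IsSymm) (y : Fin 3 → ℝ)
    (i j : Fin 3) : KABC A B C y j i = KABC A B C y i j := by
  have : (KABC A B C y)ᵀ = KABC A B C y := by
    simp only [KABC, Matrix.transpose_add, Matrix.transpose_mul,
      Matrix.transpose_transpose, hA.eq, hC.eq, Matrix.mul_assoc]
    abel
  conv_rhs => rw [← this]
  rfl

lemma KABC_e00 (A B C : M3) (hC : C.IsSymm) (p : Fin 3 → ℝ) :
    KABC A B C p 0 0 = (A 0 0) + (0) * p 0 + (2*B 0 2) * p 1 + (-(2*B 0 1)) * p 2 + (0) * (p 0 * p 0) + (0) * (p 0 * p 1) + (0) * (p 0 * p 2) + (C 2 2) * (p 1 * p 1) + (-(2*C 1 2)) * (p 1 * p 2) + (C 1 1) * (p 2 * p 2) := by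
  simp only [KABC, Matrix.add_apply, Matrix.mul_apply, Matrix.transpose_apply,
    Fin.sum_univ_three]
  norm_num [Smat, Matrix.cons_val_two, Matrix.vecHead, Matrix.vecTail]
  simp only [hC.apply 0 1, hC.apply 0 2, hC.apply 1 2]
  ring

lemma KABC_p00 (A B C : M3) (hC : C.IsSymm) (x : Fin 3 → ℝ) :
    pder 2 (fun y => KABC A B C y 0 0) x
      = (-(2*B 0 1)) + (0) * x 0 + (-(2*C 1 2)) * x 1 + 2 * (C 1 1) * x 2 := by
  rw [show (fun y => KABC A B C y 0 0)
      = (fun y : Fin 3 → ℝ => (A 0 0) + (0) * y 0 + (2*B 0 2) * y 1 + (-(2*B 0 1)) * y 2 + (0) * (y 0 * y 0) + (0) * (y 0 * y 1) + (0) * (y 0 * y 2) + (C 2 2) * (y 1 * y 1) + (-(2*C 1 2)) * (y 1 * y 2) + (C 1 1) * (y 2 * y 2)) from funext fun p => KABC_e00 A B C hC p,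
    pder2_poly]

lemma KABC_e01 (A B C : M3) (hC : C.IsSymm) (p : Fin 3 → ℝ) :
    KABC A B C p 0 1 = (A 0 1) + (-B 0 2) * p 0 + (B 1 2) * p 1 + (B 0 0 - B 1 1) * p 2 + (0) * (p 0 * p 0) + (-C 2 2) * (p 0 * p 1) + (C 1 2) * (p 0 * p 2) + (0) * (p 1 * p 1) + (C 0 2) * (p 1 * p 2) + (-C 0 1) * (p 2 * p 2) := by
  simp only [KABC, Matrix.add_apply, Matrix.mul_apply, Matrix.transpose_apply,
    Fin.sum_univ_three]
  norm_num [Smat, Matrix.cons_val_two, Matrix.vecHead, Matrix.vecTail]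
  simp only [hC.apply 0 1, hC.apply 0 2, hC.apply 1 2]
  ring

lemma KABC_p01 (A B C : M3) (hC : C.IsSymm) (x : Fin 3 → ℝ) :
    pder 2 (fun y => KABC A B C y 0 1) x
      = (B 0 0 - B 1 1) + (C 1 2) * x 0 + (C 0 2) * x 1 + 2 * (-C 0 1) * x 2 := by
  rw [show (fun y => KABC A B C y 0 1)
      = (fun y : Fin 3 → ℝ => (A 0 1) + (-B 0 2) * y 0 + (B 1 2) * y 1 + (B 0 0 - B 1 1) * y 2 + (0) * (y 0 * y 0) + (-C 2 2) * (y 0 * y 1) + (C 1 2) * (y 0 * y 2) + (0) * (y 1 * y 1) + (C 0 2) * (y 1 * y 2) + (-C 0 1) * (y 2 * y 2)) from funext fun p => KABC_e01 A B C hC p,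
    pder2_poly]

lemma KABC_e02 (A B C : M3) (hC : C.IsSymm) (p : Fin 3 → ℝ) :
    KABC A B C p 0 2 = (A 0 2) + (B 0 1) * p 0 + (B 2 2 - B 0 0) * p 1 + (-B 2 1) * p 2 + (0) * (p 0 * p 0) + (C 1 2) * (p 0 * p 1) + (-C 1 1) * (p 0 * p 2) + (-C 0 2) * (p 1 * p 1) + (C 0 1) * (p 1 * p 2) + (0) * (p 2 * p 2) := by
  simp only [KABC, Matrix.add_apply, Matrix.mul_apply, Matrix.transpose_apply,
    Fin.sum_univ_three]
  norm_num [Smat, Matrix.cons_val_two, Matrix.vecHead, Matrix.vecTail]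
  simp only [hC.apply 0 1, hC.apply 0 2, hC.apply 1 2]
  ring

lemma KABC_p02 (A B C : M3) (hC : C.IsSymm) (x : Fin 3 → ℝ) :
    pder 2 (fun y => KABC A B C y 0 2) x
      = (-B 2 1) + (-C 1 1) * x 0 + (C 0 1) * x 1 + 2 * (0) * x 2 := by
  rw [show (fun y => KABC A B C y 0 2)
      = (fun y : Fin 3 → ℝ => (A 0 2) + (B 0 1) * y 0 + (B 2 2 - B 0 0) * y 1 + (-B 2 1) * y 2 + (0) * (y 0 * y 0) + (C 1 2) * (y 0 * y 1) + (-C 1 1) * (y 0 * y 2) + (-C 0 2) * (y 1 * y 1) + (C 0 1) * (y 1 * y 2) + (0) * (y 2 * y 2)) from funext fun p => KABC_e02 A B C hC p,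
    pder2_poly]

lemma KABC_e11 (A B C : M3) (hC : C.IsSymm) (p : Fin 3 → ℝ) :
    KABC A B C p 1 1 = (A 1 1) + (-(2*B 1 2)) * p 0 + (0) * p 1 + (2*B 1 0) * p 2 + (C 2 2) * (p 0 * p 0) + (0) * (p 0 * p 1) + (-(2*C 0 2)) * (p 0 * p 2) + (0) * (p 1 * p 1) + (0) * (p 1 * p 2) + (C 0 0) * (p 2 * p 2) := by
  simp only [KABC, Matrix.add_apply, Matrix.mul_apply, Matrix.transpose_apply,
    Fin.sum_univ_three]
  norm_num [Smat, Matrix.cons_val_two, Matrix.vecHead, Matrix.vecTail]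
  simp only [hC.apply 0 1, hC.apply 0 2, hC.apply 1 2]
  ring

lemma KABC_p11 (A B C : M3) (hC : C.IsSymm) (x : Fin 3 → ℝ) :
    pder 2 (fun y => KABC A B C y 1 1) x
      = (2*B 1 0) + (-(2*C 0 2)) * x 0 + (0) * x 1 + 2 * (C 0 0) * x 2 := by
  rw [show (fun y => KABC A B C y 1 1)
      = (fun y : Fin 3 → ℝ => (A 1 1) + (-(2*B 1 2)) * y 0 + (0) * y 1 + (2*B 1 0) * y 2 + (C 2 2) * (y 0 * y 0) + (0) * (y 0 * y 1) + (-(2*C 0 2)) * (y 0 * y 2) + (0) * (y 1 * y 1) + (0) * (y 1 * y 2) + (C 0 0) * (y 2 * y 2)) from funext fun p => KABC_e11 A B C hC p,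
    pder2_poly]

lemma KABC_e12 (A B C : M3) (hC : C.IsSymm) (p : Fin 3 → ℝ) :
    KABC A B C p 1 2 = (A 1 2) + (B 1 1 - B 2 2) * p 0 + (-B 1 0) * p 1 + (B 2 0) * p 2 + (-C 1 2) * (p 0 * p 0) + (C 0 2) * (p 0 * p 1) + (C 0 1) * (p 0 * p 2) + (0) * (p 1 * p 1) + (-C 0 0) * (p 1 * p 2) + (0) * (p 2 * p 2) := by
  simp only [KABC, Matrix.add_apply, Matrix.mul_apply, Matrix.transpose_apply,
    Fin.sum_univ_three]
  norm_num [Smat, Matrix.cons_val_two, Matrix.vecHead, Matrix.vecTail]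
  simp only [hC.apply 0 1, hC.apply 0 2, hC.apply 1 2]
  ring

lemma KABC_p12 (A B C : M3) (hC : C.IsSymm) (x : Fin 3 → ℝ) :
    pder 2 (fun y => KABC A B C y 1 2) x
      = (B 2 0) + (C 0 1) * x 0 + (-C 0 0) * x 1 + 2 * (0) * x 2 := by
  rw [show (fun y => KABC A B C y 1 2)
      = (fun y : Fin 3 → ℝ => (A 1 2) + (B 1 1 - B 2 2) * y 0 + (-B 1 0) * y 1 + (B 2 0) * y 2 + (-C 1 2) * (y 0 * y 0) + (C 0 2) * (y 0 * y 1) + (C 0 1) * (y 0 * y 2) + (0) * (y 1 * y 1) + (-C 0 0) * (y 1 * y 2) + (0) * (y 2 * y 2)) from funext fun p => KABC_e12 A B C hC p,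
    pder2_poly]

lemma KABC_e22 (A B C : M3) (hC : C.IsSymm) (p : Fin 3 → ℝ) :
    KABC A B C p 2 2 = (A 2 2) + (2*B 2 1) * p 0 + (-(2*B 2 0)) * p 1 + (0) * p 2 + (C 1 1) * (p 0 * p 0) + (-(2*C 0 1)) * (p 0 * p 1) + (0) * (p 0 * p 2) + (C 0 0) * (p 1 * p 1) + (0) * (p 1 * p 2) + (0) * (p 2 * p 2) := by
  simp only [KABC, Matrix.add_apply, Matrix.mul_apply, Matrix.transpose_apply,
    Fin.sum_univ_three]
  norm_num [Smat, Matrix.cons_val_two, Matrix.vecHead, Matrix.vecTail]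
  simp only [hC.apply 0 1, hC.apply 0 2, hC.apply 1 2]
  ring

lemma KABC_p22 (A B C : M3) (hC : C.IsSymm) (x : Fin 3 → ℝ) :
    pder 2 (fun y => KABC A B C y 2 2) x
      = (0) + (0) * x 0 + (0) * x 1 + 2 * (0) * x 2 := by
  rw [show (fun y => KABC A B C y 2 2)
      = (fun y : Fin 3 → ℝ => (A 2 2) + (2*B 2 1) * y 0 + (-(2*B 2 0)) * y 1 + (0) * y 2 + (C 1 1) * (y 0 * y 0) + (-(2*C 0 1)) * (y 0 * y 1) + (0) * (y 0 * y 2) + (C 0 0) * (y 1 * y 1) + (0) * (y 1 * y 2) + (0) * (y 2 * y 2)) from funext fun p => KABC_e22 A B C hC p,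
    pder2_poly]

/-- STATEMENT 8: a Killing tensor `K_{A,B,C}` is invariant under the translations
generated by `X₃ = ∂/∂z` iff its components have the stated translational form. -/
theorem z_translation_invariant_Killing_tensor_form
    (A B C : M3) (hA : A.IsSymm) (hC : C.IsSymm) :
    (∀ (x : Fin 3 → ℝ) (i j : Fin 3),
        pder 2 (fun y => KABC A B C y i j) x = 0) ↔
    ∃ a₁ a₂ a₃ α₁ α₂ α₃ b₁₃ b₂₃ β₁ c₃ : ℝ, ∀ p : Fin 3 → ℝ,
      KABC A B C p 0 0 = a₁ + 2 * b₁₃ * p 1 + c₃ * (p 1) ^ 2 ∧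
      KABC A B C p 0 1 = α₃ - b₁₃ * p 0 + b₂₃ * p 1 - c₃ * p 0 * p 1 ∧
      KABC A B C p 0 2 = α₂ - β₁ * p 1 ∧
      KABC A B C p 1 1 = a₂ - 2 * b₂₃ * p 0 + c₃ * (p 0) ^ 2 ∧
      KABC A B C p 1 2 = α₁ + β₁ * p 0 ∧
      KABC A B C p 2 2 = a₃ := by
  constructor
  · intro H
    have q000 := H (fun _ => 0) 0 0; rw [KABC_p00 A B C hC] at q000
    have q001 := H (Pi.single 1 1) 0 0; rw [KABC_p00 A B C hC] at q001
    have q002 := H (Pi.single 2 1) 0 0; rw [KABC_p00 A B C hC] at q002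
    have q010 := H (fun _ => 0) 0 1; rw [KABC_p01 A B C hC] at q010
    have q011 := H (Pi.single 1 1) 0 1; rw [KABC_p01 A B C hC] at q011
    have q012 := H (Pi.single 2 1) 0 1; rw [KABC_p01 A B C hC] at q012
    have q020 := H (fun _ => 0) 0 2; rw [KABC_p02 A B C hC] at q020
    have q110 := H (fun _ => 0) 1 1; rw [KABC_p11 A B C hC] at q110
    have q112 := H (Pi.single 2 1) 1 1; rw [KABC_p11 A B C hC] at q112
    have q120 := H (fun _ => 0) 1 2; rw [KABC_p12 A B C hC] at q120
    simp only [Pi.single_apply] at q000 q001 q002 q010 q011 q012 q020 q110 q112 q120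
    norm_num [Fin.ext_iff] at q000 q001 q002 q010 q011 q012 q020 q110 q112 q120
    have hB01 : B 0 1 = 0 := by linarith
    have hC12 : C 1 2 = 0 := by linarith
    have hC11 : C 1 1 = 0 := by linarith
    have hBd : B 0 0 = B 1 1 := by linarith
    have hC02 : C 0 2 = 0 := by linarith
    have hC01 : C 0 1 = 0 := by linarith
    have hB21 : B 2 1 = 0 := by linarith
    have hB10 : B 1 0 = 0 := by linarith
    have hC00 : C 0 0 = 0 := by linarith
    have hB20 : B 2 0 = 0 := by linarith
    refine ⟨A 0 0, A 1 1, A 2 2, A 1 2, A 0 2, A 0 1, B 0 2, B 1 2, B 0 0 - B 2 2, C 2 2,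
      fun p => ⟨?_, ?_, ?_, ?_, ?_, ?_⟩⟩
    · rw [KABC_e00 A B C hC p]
      simp only [hB01, hC12, hC11, hBd, hC02, hC01, hB21, hB10, hC00, hB20]; ring
    · rw [KABC_e01 A B C hC p]
      simp only [hB01, hC12, hC11, hBd, hC02, hC01, hB21, hB10, hC00, hB20]; ring
    · rw [KABC_e02 A B C hC p]
      simp only [hB01, hC12, hC11, hBd, hC02, hC01, hB21, hB10, hC00, hB20]; ring
    · rw [KABC_e11 A B C hC p]
      simp only [hB01, hC12, hC11, hBd, hC02, hC01, hB21, hB10, hC00, hB20]; ring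
    · rw [KABC_e12 A B C hC p]
      simp only [hB01, hC12, hC11, hBd, hC02, hC01, hB21, hB10, hC00, hB20]; ring
    · rw [KABC_e22 A B C hC p]
      simp only [hB01, hC12, hC11, hBd, hC02, hC01, hB21, hB10, hC00, hB20]; ring
  · rintro ⟨a₁, a₂, a₃, α₁, α₂, α₃, b₁₃, b₂₃, β₁, c₃, h⟩ x i j
    fin_cases i <;> fin_cases j
    · show pder 2 (fun y => KABC A B C y 0 0) x = 0
      rw [show (fun y => KABC A B C y 0 0)
          = (fun y : Fin 3 → ℝ => (a₁) + (0) * y 0 + (2*b₁₃) * y 1 + (0) * y 2 + (0) * (y 0 * y 0) + (0) * (y 0 * y 1) + (0) * (y 0 * y 2) + (c₃) * (y 1 * y 1) + (0) * (y 1 * y 2) + (0) * (y 2 * y 2))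
        from funext fun y => by rw [(h y).1]; ring, pder2_poly]
      ring
    · show pder 2 (fun y => KABC A B C y 0 1) x = 0
      rw [show (fun y => KABC A B C y 0 1)
          = (fun y : Fin 3 → ℝ => (α₃) + (-b₁₃) * y 0 + (b₂₃) * y 1 + (0) * y 2 + (0) * (y 0 * y 0) + (-c₃) * (y 0 * y 1) + (0) * (y 0 * y 2) + (0) * (y 1 * y 1) + (0) * (y 1 * y 2) + (0) * (y 2 * y 2))
        from funext fun y => by rw [(h y).2.1]; ring, pder2_poly]
      ring
    · show pder 2 (fun y => KABC A B C y 0 2) x = 0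
      rw [show (fun y => KABC A B C y 0 2)
          = (fun y : Fin 3 → ℝ => (α₂) + (0) * y 0 + (-β₁) * y 1 + (0) * y 2 + (0) * (y 0 * y 0) + (0) * (y 0 * y 1) + (0) * (y 0 * y 2) + (0) * (y 1 * y 1) + (0) * (y 1 * y 2) + (0) * (y 2 * y 2))
        from funext fun y => by rw [(h y).2.2.1]; ring, pder2_poly]
      ring
    · show pder 2 (fun y => KABC A B C y 1 0) x = 0
      rw [show (fun y => KABC A B C y 1 0)
          = (fun y : Fin 3 → ℝ => (α₃) + (-b₁₃) * y 0 + (b₂₃) * y 1 + (0) * y 2 + (0) * (y 0 * y 0) + (-c₃) * (y 0 * y 1) + (0) * (y 0 * y 2) + (0) * (y 1 * y 1) + (0) * (y 1 * y 2) + (0) * (y 2 * y 2))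
        from funext fun y => by rw [KABC_symm A B C hA hC y 0 1, (h y).2.1]; ring, pder2_poly]
      ring
    · show pder 2 (fun y => KABC A B C y 1 1) x = 0
      rw [show (fun y => KABC A B C y 1 1)
          = (fun y : Fin 3 → ℝ => (a₂) + (-(2*b₂₃)) * y 0 + (0) * y 1 + (0) * y 2 + (c₃) * (y 0 * y 0) + (0) * (y 0 * y 1) + (0) * (y 0 * y 2) + (0) * (y 1 * y 1) + (0) * (y 1 * y 2) + (0) * (y 2 * y 2))
        from funext fun y => by rw [(h y).2.2.2.1]; ring, pder2_poly]
      ring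
    · show pder 2 (fun y => KABC A B C y 1 2) x = 0
      rw [show (fun y => KABC A B C y 1 2)
          = (fun y : Fin 3 → ℝ => (α₁) + (β₁) * y 0 + (0) * y 1 + (0) * y 2 + (0) * (y 0 * y 0) + (0) * (y 0 * y 1) + (0) * (y 0 * y 2) + (0) * (y 1 * y 1) + (0) * (y 1 * y 2) + (0) * (y 2 * y 2))
        from funext fun y => by rw [(h y).2.2.2.2.1]; ring, pder2_poly]
      ring
    · show pder 2 (fun y => KABC A B C y 2 0) x = 0
      rw [show (fun y => KABC A B C y 2 0)
          = (fun y : Fin 3 → ℝ => (α₂) + (0) * y 0 + (-β₁) * y 1 + (0) * y 2 + (0) * (y 0 * y 0) + (0) * (y 0 * y 1) + (0) * (y 0 * y 2) + (0) * (y 1 * y 1) + (0) * (y 1 * y 2) + (0) * (y 2 * y 2))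
        from funext fun y => by rw [KABC_symm A B C hA hC y 0 2, (h y).2.2.1]; ring, pder2_poly]
      ring
    · show pder 2 (fun y => KABC A B C y 2 1) x = 0
      rw [show (fun y => KABC A B C y 2 1)
          = (fun y : Fin 3 → ℝ => (α₁) + (β₁) * y 0 + (0) * y 1 + (0) * y 2 + (0) * (y 0 * y 0) + (0) * (y 0 * y 1) + (0) * (y 0 * y 2) + (0) * (y 1 * y 1) + (0) * (y 1 * y 2) + (0) * (y 2 * y 2))
        from funext fun y => by rw [KABC_symm A B C hA hC y 1 2, (h y).2.2.2.2.1]; ring, pder2_poly]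
      ring
    · show pder 2 (fun y => KABC A B C y 2 2) x = 0
      rw [show (fun y => KABC A B C y 2 2)
          = (fun y : Fin 3 → ℝ => (a₃) + (0) * y 0 + (0) * y 1 + (0) * y 2 + (0) * (y 0 * y 0) + (0) * (y 0 * y 1) + (0) * (y 0 * y 2) + (0) * (y 1 * y 1) + (0) * (y 1 * y 2) + (0) * (y 2 * y 2))
        from funext fun y => by rw [(h y).2.2.2.2.2]; ring, pder2_poly]
      ring
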